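/- The complex singular set of the cross-ratio variety satisfies 𝔛_ℂ = {(x₁,x₂,x₃) ∈ 𝔛 : x₃ real and x₃ > 0} ∪ 𝔛_ℝ, where 𝔛_ℂ = {(x₁,x₂,x₃) ∈ 𝔛 : Im(x₃) = 0}. Equivalently: for (x₁,x₂,x₃) ∈ 𝔛 with Im(x₃) = 0 and x₃ < 0, the coordinates x₁ and x₂ are real with x₁ + x₂ = 1 and x₃ = −x₂/x₁, so the point lies in 𝔛_ℝ. -/

import Mathlib

noncomputable section

open Complex

/-- Falbel's cross-ratio variety 𝔛 as a subset of ℂ³. -/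
def Xvar : Set (ℂ × ℂ × ℂ) :=
  {x | x.1 ≠ 0 ∧ x.2.1 ≠ 0 ∧ x.2.2 ≠ 0 ∧
    ‖x.2.1‖ = ‖x.1‖ * ‖x.2.2‖ ∧
    2 * (‖x.1‖) ^ 2 * x.2.2.re =
      (‖x.1‖) ^ 2 + (‖x.2.1‖) ^ 2
        - 2 * x.1.re - 2 * x.2.1.re + 1}

/-- The real singular set 𝔛_ℝ. -/
def XR : Set (ℂ × ℂ × ℂ) :=
  {x | x ∈ Xvar ∧ x.1.im = 0 ∧ x.2.1.im = 0 ∧ x.2.2.im = 0 ∧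
    x.1 + x.2.1 = 1 ∧ 1 / x.2.1 + 1 / x.2.2 = 1 ∧ x.2.2 + 1 / x.1 = 1}

/-- The complex singular set 𝔛_ℂ. -/
def XC : Set (ℂ × ℂ × ℂ) := {x ∈ Xvar | x.2.2.im = 0}

set_option maxHeartbeats 800000 in
private lemma key (a b c : ℂ) (ha : a ≠ 0) (hb : b ≠ 0) (hc : c ≠ 0)
    (habs : ‖b‖ = ‖a‖ * ‖c‖)
    (heq : 2 * (‖a‖) ^ 2 * c.re =
      (‖a‖) ^ 2 + (‖b‖) ^ 2 - 2 * a.re - 2 * b.re + 1)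
    (him : c.im = 0) (hneg : c.re < 0) :
    a.im = 0 ∧ b.im = 0 ∧ a + b = 1 ∧ c = -b / a ∧
      1 / b + 1 / c = 1 ∧ c + 1 / a = 1 := by
  set A := ‖a‖ with hAdef
  set B := ‖b‖ with hBdef
  have hcabs : ‖c‖ = -c.re := by
    rw [← Complex.abs_re_eq_norm.mpr him, abs_of_neg hneg]
  have hB : B = A * (-c.re) := by rw [habs, hcabs]
  have h1 : a.re ≤ A := Complex.re_le_norm a
  have h2 : b.re ≤ B := Complex.re_le_norm b
  have hApos : 0 < A := norm_pos_iff.mpr ha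
  have hBpos : 0 < B := norm_pos_iff.mpr hb
  rw [hB] at heq h2
  have hsq : (A * (1 - c.re) - 1) ^ 2 ≤ 0 := by nlinarith [heq, h1, h2]
  have hs1 : A * (1 - c.re) = 1 := by
    have := sq_eq_zero_iff.mp (le_antisymm hsq (sq_nonneg _))
    linarith
  have hs2 : (A * (1 - c.re)) ^ 2 = 1 := by rw [hs1]; norm_num
  have hpu : a.re + b.re = 1 := by nlinarith [heq, hs2]
  have hp : a.re = A := by nlinarith [h1, h2, hs1, hpu]
  have hq : b.re = A * (-c.re) := by nlinarith [h1, h2, hs1, hpu]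
  have hnsqa : A ^ 2 = a.re ^ 2 + a.im ^ 2 := by
    rw [hAdef, Complex.sq_norm, Complex.normSq_apply]; ring
  have hnsqb : B ^ 2 = b.re ^ 2 + b.im ^ 2 := by
    rw [hBdef, Complex.sq_norm, Complex.normSq_apply]; ring
  rw [hB] at hnsqb
  have hpa2 : a.re ^ 2 = A ^ 2 := by rw [hp]
  have hpb2 : b.re ^ 2 = (A * (-c.re)) ^ 2 := by rw [hq]
  have haim : a.im = 0 := by
    have : a.im ^ 2 = 0 := by linarith
    exact pow_eq_zero_iff two_ne_zero |>.mp this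
  have hbim : b.im = 0 := by
    have : b.im ^ 2 = 0 := by linarith
    exact pow_eq_zero_iff two_ne_zero |>.mp this
  have hab : a + b = 1 := by
    apply Complex.ext <;> simp [haim, hbim, hpu]
  have hpApos : 0 < a.re := by rw [hp]; exact hApos
  have hca : a * c = -b := by
    apply Complex.ext <;>
      simp [Complex.mul_re, Complex.mul_im, haim, hbim, him]
    have hq' : b.re = a.re * (-c.re) := by rw [hp]; exact hq
    linarith [hq']
  have hcval : c = -b / a := by
    rw [eq_div_iff ha, ← hca]; ring
  refine ⟨haim, hbim, hab, hcval, ?_, ?_⟩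
  · have h : 1 / c = -a / b := by
      rw [div_eq_div_iff hc hb]
      linear_combination hca
    rw [h]
    field_simp
    linear_combination -hab
  · rw [hcval]
    field_simp
    linear_combination -hab


/-- `𝔛_ℂ = {x ∈ 𝔛 : x₃ real and positive} ∪ 𝔛_ℝ`; equivalently, a point of 𝔛
with `x₃` real and negative lies in 𝔛_ℝ, with `x₁, x₂` real, `x₁ + x₂ = 1` and
`x₃ = −x₂/x₁`. -/
theorem complex_singular_set :
    XC = {x ∈ Xvar | x.2.2.im = 0 ∧ 0 < x.2.2.re} ∪ XR ∧
    (∀ x ∈ Xvar, x.2.2.im = 0 → x.2.2.re < 0 →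
      x.1.im = 0 ∧ x.2.1.im = 0 ∧ x.1 + x.2.1 = 1 ∧
      x.2.2 = -x.2.1 / x.1 ∧ x ∈ XR) := by
  have key2 : ∀ x ∈ Xvar, x.2.2.im = 0 → x.2.2.re < 0 →
      x.1.im = 0 ∧ x.2.1.im = 0 ∧ x.1 + x.2.1 = 1 ∧
      x.2.2 = -x.2.1 / x.1 ∧ x ∈ XR := by
    rintro ⟨a, b, c⟩ ⟨ha, hb, hc, habs, heq⟩ him hneg
    obtain ⟨haim, hbim, hab, hcval, e1, e2⟩ := key a b c ha hb hc habs heq him hneg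
    exact ⟨haim, hbim, hab, hcval,
      ⟨⟨ha, hb, hc, habs, heq⟩, haim, hbim, him, hab, e1, e2⟩⟩
  refine ⟨?_, key2⟩
  ext x
  simp only [XC, Set.mem_union, Set.mem_setOf_eq]
  constructor
  · rintro ⟨hx, him⟩
    rcases lt_trichotomy x.2.2.re 0 with h | h | h
    · exact Or.inr ((key2 x hx him h).2.2.2.2)
    · exact absurd (Complex.ext (z := x.2.2) (w := 0) h him) hx.2.2.1
    · exact Or.inl ⟨hx, him, h⟩
  · rintro (⟨hx, him, -⟩ | hx)
    · exact ⟨hx, him⟩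
    · exact ⟨hx.1, hx.2.2.2.1⟩
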